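/- Let G be a torsion-free abelian group and let R be a G-graded commutative ring. Then every minimal prime ideal of R is a graded ideal; in particular, the nilradical of R is a graded ideal. -/

import Mathlib

open scoped nonZeroDivisors

/-- Every minimal prime ideal of a `G`-graded commutative ring with `G` a torsion-free abelian
group is a graded ideal; in particular, the nilradical is a graded ideal. -/
theorem minimalPrimes_isHomogeneous_and_nilradical_isHomogeneous
    {G : Type*} [AddCommGroup G] [DecidableEq G]
    (hG : ∀ (n : ℕ) (x : G), n ≠ 0 → n • x = 0 → x = 0)
    {R : Type*} [CommRing R] (𝒜 : G → AddSubgroup R) [GradedRing 𝒜] :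
    (∀ P ∈ minimalPrimes R, Ideal.IsHomogeneous 𝒜 P) ∧
      Ideal.IsHomogeneous 𝒜 (nilradical R) := by
  classical
  -- Step 1: embed `G` into a linearly ordered abelian group, namely `Lex (ι →₀ ℚ)` where
  -- `ι` indexes a basis of the `ℚ`-vector space obtained by localizing `G` at `ℤ⁰`.
  let K := FractionRing ℤ
  let L := LocalizedModule ℤ⁰ G
  let f := LocalizedModule.mkLinearMap ℤ⁰ G
  have hf : Function.Injective f := by
    intro x y hxy
    have h0 : f (x - y) = 0 := by rw [map_sub, hxy, sub_self]
    obtain ⟨r, hr, hrxy⟩ :=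
      (LocalizedModule.mem_ker_mkLinearMap_iff (S := ℤ⁰) (m := x - y)).mp (by exact h0)
    have hr0 : r ≠ 0 := nonZeroDivisors.ne_zero hr
    have hn : (r.natAbs : ℤ) • (x - y) = 0 := by
      rcases Int.natAbs_eq r with h | h
      · rw [← h]; exact hrxy
      · have : -(r.natAbs : ℤ) • (x - y) = 0 := by rw [← h]; exact hrxy
        simpa [neg_smul, neg_eq_zero] using this
    rw [natCast_zsmul] at hn
    have := hG r.natAbs (x - y) (by simpa using hr0) hn
    exact sub_eq_zero.mp this
  let B := Module.Basis.ofVectorSpace K L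
  let ι := Module.Basis.ofVectorSpaceIndex K L
  letI : LinearOrder ι := linearOrderOfSTO WellOrderingRel
  let H := Lex (ι →₀ ℚ)
  let e₂ : L ≃+ (ι →₀ K) := B.repr.toAddEquiv
  let e₃ : (ι →₀ K) ≃+ (ι →₀ ℚ) :=
    Finsupp.mapRange.addEquiv (FractionRing.algEquiv ℤ ℚ).toRingEquiv.toAddEquiv
  let e₄ : (ι →₀ ℚ) ≃+ H := { toEquiv := toLex, map_add' := toLex_add }
  let e : G →+ H := AddMonoidHom.mk' (fun g => e₄ (e₃ (e₂ (f g)))) (by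
    intro a b; simp only [map_add])
  have he : Function.Injective e := fun a b h =>
    hf (e₂.injective (e₃.injective (e₄.injective h)))
  -- Step 2: transport the linear order back to `G`.
  letI lin : LinearOrder G :=
    { le := fun a b => e a ≤ e b
      lt := fun a b => e a < e b
      le_refl := fun a => show e a ≤ e a from le_refl _
      le_trans := fun a b c hab hbc => show e a ≤ e c from le_trans hab hbc
      lt_iff_le_not_ge := fun a b => lt_iff_le_not_ge (a := e a) (b := e b)
      le_antisymm := fun a b h1 h2 => he (le_antisymm h1 h2)
      le_total := fun a b => le_total (e a) (e b)
      toDecidableLE := fun a b => Classical.dec _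
      toDecidableEq := ‹DecidableEq G› }
  letI : IsOrderedCancelAddMonoid G :=
    { add_le_add_left := fun a b h c => by
        show e (a + c) ≤ e (b + c)
        rw [map_add, map_add]
        exact add_le_add (show e a ≤ e b from h) le_rfl
      le_of_add_le_add_left := fun a b c h => by
        show e b ≤ e c
        have h' : e (a + b) ≤ e (a + c) := h
        rw [map_add, map_add] at h'
        exact le_of_add_le_add_left h' }
  -- Step 3: apply the graded radical theory.
  constructor
  · intro P hP
    have hQ : ((P.homogeneousCore 𝒜).toIdeal).IsPrime :=
      Ideal.IsPrime.homogeneousCore hP.1.1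
    have hle : (P.homogeneousCore 𝒜).toIdeal ≤ P := Ideal.toIdeal_homogeneousCore_le 𝒜 P
    have hge : P ≤ (P.homogeneousCore 𝒜).toIdeal := hP.2 ⟨hQ, bot_le⟩ hle
    have : P = (P.homogeneousCore 𝒜).toIdeal := le_antisymm hge hle
    rw [this]
    exact (P.homogeneousCore 𝒜).is_homogeneous'
  · have hbot : (⊥ : Ideal R).IsHomogeneous 𝒜 := Ideal.IsHomogeneous.bot 𝒜
    have := hbot.radical
    simpa [nilradical, Ideal.zero_eq_bot] using this
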